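/- Let M be an atom-free MVS and (X,f) an M-full M-space. For m ∈ M let U_m = {(x,y) : f(x,y) ⊴ m}. Then the map h : M → {U_m : m ∈ M}, h(m) = U_m, satisfies: U_m ⊆ U_{m'} iff m ⊴ m'. If moreover (X,f) is M-convex, then U_m + U_{m'} = U_{m+m'}, where U + V is the intersection of all sets U_n containing V ∘ U; in particular h is a surjective MVS homomorphism onto ({U_m : m ∈ M}, +), which is itself an atom-free MVS with neutral element U_e. -/
import Mathlib


universe u v w

structure MVS (M : Type u) where
  add : M → M → M
  e : M
  assoc : ∀ a b c : M, add (add a b) c = add a (add b c)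
  add_e : ∀ a : M, add a e = a
  e_add : ∀ a : M, add e a = a
  eq_e_of_add_eq_e : ∀ a b : M, add a b = e → a = e ∧ b = e
  exists_common : ∀ a b : M, a ≠ e → b ≠ e →
    ∃ c, c ≠ e ∧ (∃ d, add c d = a) ∧ (∃ d, add c d = b)
  nontrivial : ∃ a : M, a ≠ e

variable {M : Type u} {X : Type v}

/-- `a ⊴ b` iff there is `c` with `a + c = b`. -/
def MVS.le (S : MVS M) (a b : M) : Prop := ∃ c, S.add a c = b

/-- `a ◁ b` iff there is `c ≠ e` with `a + c = b`. -/
def MVS.lt (S : MVS M) (a b : M) : Prop := ∃ c, c ≠ S.e ∧ S.add a c = b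

def MVS.Commutative (S : MVS M) : Prop := ∀ a b, S.add a b = S.add b a

/-- An MVS is atom-free if it is commutative and every `m ≠ e` admits `n ≠ e` with `n ◁ m`. -/
def MVS.AtomFree (S : MVS M) : Prop :=
  S.Commutative ∧ ∀ m, m ≠ S.e → ∃ n, n ≠ S.e ∧ S.lt n m

/-- A quasimetric function: triangle inequality and `f x x = e`. -/
def IsQuasimetric (S : MVS M) (f : X → X → M) : Prop :=
  (∀ x y z, S.le (f x z) (S.add (f x y) (f y z))) ∧ ∀ x, f x x = S.e

/-- Open ball `B_f(x,m) = {y | f x y ◁ m}`. -/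
def ball (S : MVS M) (f : X → X → M) (x : X) (m : M) : Set X := {y | S.lt (f x y) m}

/-- Closed ball `B̄_f(x,m) = {y | f x y ⊴ m}`. -/
def closedBall (S : MVS M) (f : X → X → M) (x : X) (m : M) : Set X := {y | S.le (f x y) m}

/-- The topology induced by a quasimetric function: open balls form a neighbourhood base. -/
def qTopology (S : MVS M) (f : X → X → M) : TopologicalSpace X :=
  TopologicalSpace.mkOfNhds fun x => ⨅ m ∈ {m : M | m ≠ S.e}, Filter.principal (ball S f x m)

/-- Entourage `U_m = {(x,y) | f x y ⊴ m}`. -/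
def ent (S : MVS M) (f : X → X → M) (m : M) : Set (X × X) := {p | S.le (f p.1 p.2) m}

/-- `qcomp A B = A ∘ B = {(x,z) | ∃ y, (x,y) ∈ B ∧ (y,z) ∈ A}`. -/
def qcomp (A B : Set (X × X)) : Set (X × X) := {p | ∃ y, (p.1, y) ∈ B ∧ (y, p.2) ∈ A}

def IsQuasiUniformity (U : Set (Set (X × X))) : Prop :=
  U.Nonempty ∧
  (∀ u ∈ U, ∀ x : X, (x, x) ∈ u) ∧
  (∀ u ∈ U, ∀ v : Set (X × X), u ⊆ v → v ∈ U) ∧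
  (∀ u ∈ U, ∀ v ∈ U, u ∩ v ∈ U) ∧
  (∀ u ∈ U, ∃ v ∈ U, qcomp v v ⊆ u)

def IsBaseOf (B U : Set (Set (X × X))) : Prop := B ⊆ U ∧ ∀ u ∈ U, ∃ b ∈ B, b ⊆ u

/-- `U + V` : the intersection of all entourages `U_n` containing `V ∘ U`. -/
def addEnt (S : MVS M) (f : X → X → M) (A B : Set (X × X)) : Set (X × X) :=
  ⋂₀ {w | (∃ m, ent S f m = w) ∧ qcomp B A ⊆ w}

/-- The topology induced by a base of a quasiuniformity: sections `U[x]` form a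
neighbourhood base. -/
def quTopology (B : Set (Set (X × X))) : TopologicalSpace X :=
  TopologicalSpace.mkOfNhds fun x => ⨅ u ∈ B, Filter.principal {y | (x, y) ∈ u}

/-- `n`-fold sum `m + ⋯ + m`. -/
def nfold (S : MVS M) : ℕ → M → M
  | 0, _ => S.e
  | Nat.succ n, m => S.add m (nfold S n m)

theorem MVS.le_refl' (S : MVS M) (a : M) : S.le a a := ⟨S.e, S.add_e a⟩

theorem MVS.le_trans' (S : MVS M) {a b c : M} (h1 : S.le a b) (h2 : S.le b c) : S.le a c := by
  obtain ⟨u, hu⟩ := h1; obtain ⟨v, hv⟩ := h2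
  exact ⟨S.add u v, by rw [← S.assoc, hu, hv]⟩

theorem MVS.add_le_add' (S : MVS M) (hc : S.Commutative) {a b a' b' : M}
    (h1 : S.le a a') (h2 : S.le b b') : S.le (S.add a b) (S.add a' b') := by
  obtain ⟨u, hu⟩ := h1; obtain ⟨v, hv⟩ := h2
  refine ⟨S.add u v, ?_⟩
  rw [S.assoc, ← S.assoc b u v, hc b u, S.assoc u b v, ← S.assoc a u (S.add b v), hu, hv]

theorem ent_subset_iff (S : MVS M) (f : X → X → M)
    (hfull : Function.Surjective (Function.uncurry f)) (m m' : M) :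
    ent S f m ⊆ ent S f m' ↔ S.le m m' := by
  constructor
  · intro h
    obtain ⟨p, hp⟩ := hfull m
    have hp' : f p.1 p.2 = m := hp
    have hmem : p ∈ ent S f m := by
      rw [ent, Set.mem_setOf_eq, hp']; exact S.le_refl' m
    have := h hmem
    rwa [ent, Set.mem_setOf_eq, hp'] at this
  · intro h p hp
    exact S.le_trans' hp h

theorem ent_eq_e_iff (S : MVS M) (f : X → X → M)
    (hfull : Function.Surjective (Function.uncurry f)) (m : M) :
    ent S f m = ent S f S.e ↔ m = S.e := by
  constructor
  · intro h
    obtain ⟨c, hc⟩ := (ent_subset_iff S f hfull m S.e).1 h.le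
    exact (S.eq_e_of_add_eq_e m c hc).1
  · rintro rfl; rfl

theorem addEnt_ent (S : MVS M) (hc : S.Commutative) (f : X → X → M)
    (hq : IsQuasimetric S f) (hfull : Function.Surjective (Function.uncurry f))
    (hconv : ∀ (m2 m3 : M) (x y : X), f x y = S.add m2 m3 →
        ∃ z, f x z = m2 ∧ f z y = m3) (m m' : M) :
    addEnt S f (ent S f m) (ent S f m') = ent S f (S.add m m') := by
  apply subset_antisymm
  · apply Set.sInter_subset_of_mem
    refine ⟨⟨S.add m m', rfl⟩, ?_⟩
    rintro ⟨x, z⟩ ⟨y, hxy, hyz⟩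
    exact S.le_trans' (hq.1 x y z) (S.add_le_add' hc hxy hyz)
  · intro p hp
    apply Set.mem_sInter.2
    rintro w ⟨⟨n, rfl⟩, hw⟩
    obtain ⟨⟨x, y⟩, hxy⟩ := hfull (S.add m m')
    simp only [Function.uncurry] at hxy
    obtain ⟨z, hz1, hz2⟩ := hconv m m' x y hxy
    have hmem : (x, y) ∈ qcomp (ent S f m') (ent S f m) :=
      ⟨z, by rw [ent, Set.mem_setOf_eq]; exact hz1 ▸ S.le_refl' m,
          by rw [ent, Set.mem_setOf_eq]; exact hz2 ▸ S.le_refl' m'⟩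
    have hle : S.le (S.add m m') n := by
      have := hw hmem
      rwa [ent, Set.mem_setOf_eq, hxy] at this
    exact S.le_trans' hp hle


noncomputable def entsMVS (S : MVS M) (hAF : S.AtomFree) (f : X → X → M)
    (hq : IsQuasimetric S f) (hfull : Function.Surjective (Function.uncurry f))
    (hconv : ∀ (m2 m3 : M) (x y : X), f x y = S.add m2 m3 →
        ∃ z, f x z = m2 ∧ f z y = m3) :
    MVS {U : Set (X × X) // ∃ m, ent S f m = U} where
  add A B := ⟨addEnt S f A.1 B.1, S.add A.2.choose B.2.choose, by
    rw [← addEnt_ent S hAF.1 f hq hfull hconv, A.2.choose_spec, B.2.choose_spec]⟩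
  e := ⟨ent S f S.e, S.e, rfl⟩
  assoc := by
    have key := addEnt_ent S hAF.1 f hq hfull hconv
    rintro ⟨A, a, rfl⟩ ⟨B, b, rfl⟩ ⟨C, c, rfl⟩
    apply Subtype.ext
    show addEnt S f (addEnt S f (ent S f a) (ent S f b)) (ent S f c)
        = addEnt S f (ent S f a) (addEnt S f (ent S f b) (ent S f c))
    rw [key a b, key b c, key, key, S.assoc]
  add_e := by
    have key := addEnt_ent S hAF.1 f hq hfull hconv
    rintro ⟨A, a, rfl⟩
    apply Subtype.ext
    show addEnt S f (ent S f a) (ent S f S.e) = ent S f a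
    rw [key, S.add_e]
  e_add := by
    have key := addEnt_ent S hAF.1 f hq hfull hconv
    rintro ⟨A, a, rfl⟩
    apply Subtype.ext
    show addEnt S f (ent S f S.e) (ent S f a) = ent S f a
    rw [key, S.e_add]
  eq_e_of_add_eq_e := by
    have key := addEnt_ent S hAF.1 f hq hfull hconv
    rintro ⟨A, a, rfl⟩ ⟨B, b, rfl⟩ h
    have hv : addEnt S f (ent S f a) (ent S f b) = ent S f S.e := congrArg Subtype.val h
    rw [key] at hv
    obtain ⟨ha, hb⟩ := S.eq_e_of_add_eq_e a b ((ent_eq_e_iff S f hfull _).1 hv)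
    constructor <;> apply Subtype.ext
    · show ent S f a = ent S f S.e; rw [ha]
    · show ent S f b = ent S f S.e; rw [hb]
  exists_common := by
    have key := addEnt_ent S hAF.1 f hq hfull hconv
    rintro ⟨A, a, rfl⟩ ⟨B, b, rfl⟩ hA hB
    have ha : a ≠ S.e := by
      rintro rfl; exact hA (Subtype.ext rfl)
    have hb : b ≠ S.e := by
      rintro rfl; exact hB (Subtype.ext rfl)
    obtain ⟨c, hc, ⟨d1, hd1⟩, ⟨d2, hd2⟩⟩ := S.exists_common a b ha hb
    refine ⟨⟨ent S f c, c, rfl⟩, ?_, ⟨⟨ent S f d1, d1, rfl⟩, ?_⟩, ⟨⟨ent S f d2, d2, rfl⟩, ?_⟩⟩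
    · intro h
      exact hc ((ent_eq_e_iff S f hfull c).1 (congrArg Subtype.val h))
    · apply Subtype.ext
      show addEnt S f (ent S f c) (ent S f d1) = ent S f a
      rw [key, hd1]
    · apply Subtype.ext
      show addEnt S f (ent S f c) (ent S f d2) = ent S f b
      rw [key, hd2]
  nontrivial := by
    obtain ⟨a, ha⟩ := S.nontrivial
    refine ⟨⟨ent S f a, a, rfl⟩, ?_⟩
    intro h
    exact ha ((ent_eq_e_iff S f hfull a).1 (congrArg Subtype.val h))

theorem stmt_17 (S : MVS M) (hAF : S.AtomFree) (f : X → X → M)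
    (hq : IsQuasimetric S f) (hfull : Function.Surjective (Function.uncurry f)) :
    (∀ m m' : M, ent S f m ⊆ ent S f m' ↔ S.le m m') ∧
    ((∀ (m2 m3 : M) (x y : X), f x y = S.add m2 m3 →
        ∃ z, f x z = m2 ∧ f z y = m3) →
      (∀ m m' : M, addEnt S f (ent S f m) (ent S f m') = ent S f (S.add m m')) ∧
      ∃ T : MVS {U : Set (X × X) // ∃ m, ent S f m = U},
        T.e = ⟨ent S f S.e, S.e, rfl⟩ ∧
        (∀ A B : {U : Set (X × X) // ∃ m, ent S f m = U},
          (T.add A B).1 = addEnt S f A.1 B.1) ∧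
        T.AtomFree ∧
        Function.Surjective
          (fun m : M => (⟨ent S f m, m, rfl⟩ : {U : Set (X × X) // ∃ m, ent S f m = U})) ∧
        (∀ m : M,
          (⟨ent S f m, m, rfl⟩ : {U : Set (X × X) // ∃ m, ent S f m = U}) = T.e ↔ m = S.e) ∧
        (∀ m n : M,
          (⟨ent S f (S.add m n), S.add m n, rfl⟩ : {U : Set (X × X) // ∃ m, ent S f m = U}) =
            T.add ⟨ent S f m, m, rfl⟩ ⟨ent S f n, n, rfl⟩)) := by
  refine ⟨ent_subset_iff S f hfull, ?_⟩
  intro hconv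
  have key := addEnt_ent S hAF.1 f hq hfull hconv
  refine ⟨key, entsMVS S hAF f hq hfull hconv, rfl, fun A B => rfl, ?_, ?_, ?_, ?_⟩
  · constructor
    · rintro ⟨A, a, rfl⟩ ⟨B, b, rfl⟩
      apply Subtype.ext
      show addEnt S f (ent S f a) (ent S f b) = addEnt S f (ent S f b) (ent S f a)
      rw [key, key, hAF.1]
    · rintro ⟨A, a, rfl⟩ hA
      have ha : a ≠ S.e := by rintro rfl; exact hA (Subtype.ext rfl)
      obtain ⟨n, hn, c, hc, hnc⟩ := hAF.2 a ha
      refine ⟨⟨ent S f n, n, rfl⟩, ?_, ⟨ent S f c, c, rfl⟩, ?_, ?_⟩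
      · intro h; exact hn ((ent_eq_e_iff S f hfull n).1 (congrArg Subtype.val h))
      · intro h; exact hc ((ent_eq_e_iff S f hfull c).1 (congrArg Subtype.val h))
      · apply Subtype.ext
        show addEnt S f (ent S f n) (ent S f c) = ent S f a
        rw [key, hnc]
  · rintro ⟨U, m, rfl⟩
    exact ⟨m, rfl⟩
  · intro m
    constructor
    · intro h
      exact (ent_eq_e_iff S f hfull m).1 (congrArg Subtype.val h)
    · rintro rfl; rfl
  · intro m n
    exact Subtype.ext (key m n).symm
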